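/- arXiv:1110.2716 — 2 statements merged into one kernel-verified Lean document; each statement's English description precedes it below -/
import Mathlib

section
/- Let S be a t-signed set. Then every element of G^{⟨t⟩}_S lies in the ideal J̃^{⟨t⟩}_S; that is, for connected a, b ∈ S and any K ⊆ {i ∈ [t] : a_i ≠ b_i}, the binomial h_{S,K,a,b} is a sum of binomials of the form ± h_{S,k,c,d} with k ∈ [t] and c,d connected in S. -/
open MvPolynomial Finset

/-- The index set `N = [r 1] × ⋯ × [r n]`, realized as dependent functions. -/
abbrev Idx {n : ℕ} (r : Fin n → ℕ) := ∀ i, Fin (r i)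

variable {n : ℕ} {r : Fin n → ℕ}

/-- The switch `s(K,a,b)`: `b i` in the components of `K`, `a i` elsewhere. -/
def sw (K : Finset (Fin n)) (a b : Idx r) : Idx r := fun i => if i ∈ K then b i else a i

/-- The distance `d(a,b) = #{i : a i ≠ b i}`. -/
def hdist (a b : Idx r) : ℕ := (univ.filter fun i => a i ≠ b i).card

/-- The truncated distance `d_t(a,b) = #{i ∈ [t] : a i ≠ b i}`. -/
def hdistT (t : ℕ) (a b : Idx r) : ℕ :=
  (univ.filter fun i : Fin n => (i : ℕ) < t ∧ a i ≠ b i).card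

/-- `c : ℕ → N` is a path of length `m` from `a` to `b` inside `S`:
consecutive elements differ in exactly one component. -/
def IsPath (S : Set (Idx r)) (a b : Idx r) (m : ℕ) (c : ℕ → Idx r) : Prop :=
  c 0 = a ∧ c m = b ∧ (∀ j ≤ m, c j ∈ S) ∧ ∀ j < m, hdist (c j) (c (j + 1)) = 1

/-- `a` and `b` are connected in `S`. -/
def Connected (S : Set (Idx r)) (a b : Idx r) : Prop := ∃ m c, IsPath S a b m c

/-- The minimal path length `pl_S(a,b)`. -/
noncomputable def pl (S : Set (Idx r)) (a b : Idx r) : ℕ :=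
  sInf {m | ∃ c, IsPath S a b m c}

/-- `S` is `t`-switchable. -/
def Switchable (t : ℕ) (S : Set (Idx r)) : Prop :=
  ∀ a ∈ S, ∀ b ∈ S, hdist a b = 2 → ∀ i : Fin n, (i : ℕ) < t →
    sw {i} a b ∈ S ∧ sw {i} b a ∈ S

/-- `S` is `t`-signed: `t`-switchable, and each connectedness class satisfies one of:
constant first `t` coordinates, pairwise distance at most 1, or path-independent
parity of path lengths. -/
def Signed (t : ℕ) (S : Set (Idx r)) : Prop :=
  Switchable t S ∧
  ∀ a ∈ S,
    (∀ b c, Connected S a b → Connected S a c → ∀ i : Fin n, (i : ℕ) < t → b i = c i) ∨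
    (∀ b c, Connected S a b → Connected S a c → hdist b c ≤ 1) ∨
    (∀ b c, Connected S a b → Connected S a c →
      ∀ m m' p p', IsPath S b c m p → IsPath S b c m' p' → m % 2 = m' % 2)

variable (k : Type*) [Field k]

/-- The generalized determinant `f_{i,a,b}`. -/
noncomputable def fdet (i : Fin n) (a b : Idx r) : MvPolynomial (Idx r) k :=
  X a * X b - X (sw {i} a b) * X (sw {i} b a)

/-- The generalized permanent `g_{i,a,b}`. -/
noncomputable def gperm (i : Fin n) (a b : Idx r) : MvPolynomial (Idx r) k :=
  X a * X b + X (sw {i} a b) * X (sw {i} b a)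

/-- The binomial `h_{S,K,a,b}`. -/
noncomputable def hbin (S : Set (Idx r)) (K : Finset (Fin n)) (a b : Idx r) :
    MvPolynomial (Idx r) k :=
  X a * X b - (-1) ^ (K.card * (pl S a b - 1)) * (X (sw K a b) * X (sw K b a))

/-- The slice permanental ideal `J^⟨t⟩`. -/
noncomputable def Jt (t : ℕ) : Ideal (MvPolynomial (Idx r) k) :=
  Ideal.span {p | ∃ (a b : Idx r) (i : Fin n),
    hdist a b = 2 ∧ (i : ℕ) < t ∧ a i ≠ b i ∧ p = gperm k i a b}

/-- The ideal `J̃^⟨t⟩_S`. -/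
noncomputable def Jtilde (t : ℕ) (S : Set (Idx r)) : Ideal (MvPolynomial (Idx r) k) :=
  Ideal.span {p | ∃ (a b : Idx r) (i : Fin n),
    Connected S a b ∧ (i : ℕ) < t ∧ a i ≠ b i ∧ p = hbin k S {i} a b}

/-- The ideal `Var^⟨t⟩_S = (x_a : a ∉ S)`. -/
noncomputable def VarIdeal (S : Set (Idx r)) : Ideal (MvPolynomial (Idx r) k) :=
  Ideal.span {p | ∃ a ∉ S, p = X a}

/-- The ideal `Q^⟨t⟩_S = Var^⟨t⟩_S + J̃^⟨t⟩_S`. -/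
noncomputable def Qideal (t : ℕ) (S : Set (Idx r)) : Ideal (MvPolynomial (Idx r) k) :=
  VarIdeal k S + Jtilde k t S

/-- The ideal `Ĵ^⟨t⟩`. -/
noncomputable def Jhat (t : ℕ) : Ideal (MvPolynomial (Idx r) k) :=
  Ideal.span {p | ∃ (a b : Idx r) (i : Fin n),
    hdist a b = 3 ∧ hdistT t a b = 3 ∧ (i : ℕ) < t ∧ a i ≠ b i ∧ p = gperm k i a b}

/-- `S` is a maximal `t`-signed set. -/
noncomputable def MaximalSigned (t : ℕ) (S : Set (Idx r)) : Prop :=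
  Signed t S ∧ ∀ T : Set (Idx r), Signed t T → S ⊆ T → Qideal k t S ≤ Qideal k t T

section Aux

lemma exists_of_hdist_one {a b : Idx r} (h : hdist a b = 1) :
    ∃ j, a j ≠ b j ∧ ∀ l, l ≠ j → a l = b l := by
  unfold hdist at h
  obtain ⟨j, hj⟩ := Finset.card_eq_one.mp h
  refine ⟨j, ?_, ?_⟩
  · have : j ∈ univ.filter fun l => a l ≠ b l := hj ▸ Finset.mem_singleton_self j
    simpa using this
  · intro l hl
    by_contra hne
    have : l ∈ univ.filter fun l => a l ≠ b l := by simp [hne]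
    rw [hj] at this
    simp at this
    exact hl this

lemma hdist_eq_one {a b : Idx r} {j : Fin n} (h1 : a j ≠ b j) (h2 : ∀ l, l ≠ j → a l = b l) :
    hdist a b = 1 := by
  unfold hdist
  have : (univ.filter fun l => a l ≠ b l) = {j} := by
    ext l
    simp only [Finset.mem_filter, Finset.mem_univ, true_and, Finset.mem_singleton]
    constructor
    · intro hl; by_contra h; exact hl (h2 l h)
    · rintro rfl; exact h1
  rw [this, Finset.card_singleton]

lemma hdist_eq_two {a b : Idx r} {i j : Fin n} (hij : i ≠ j) (hi : a i ≠ b i) (hj : a j ≠ b j)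
    (h : ∀ l, l ≠ i → l ≠ j → a l = b l) : hdist a b = 2 := by
  unfold hdist
  have : (univ.filter fun l => a l ≠ b l) = {i, j} := by
    ext l
    simp only [Finset.mem_filter, Finset.mem_univ, true_and, Finset.mem_insert,
      Finset.mem_singleton]
    constructor
    · intro hl
      by_contra hc
      push_neg at hc
      exact hl (h l hc.1 hc.2)
    · rintro (rfl | rfl)
      · exact hi
      · exact hj
  rw [this, Finset.card_insert_of_notMem (by simp [hij]), Finset.card_singleton]

lemma hdist_comm (a b : Idx r) : hdist a b = hdist b a := by
  unfold hdist
  congr 1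
  ext l
  simp [ne_comm]

lemma sw_self (i : Fin n) (a b : Idx r) : sw {i} a b i = b i := by simp [sw]

lemma sw_other {i j : Fin n} (h : j ≠ i) (a b : Idx r) : sw {i} a b j = a j := by
  simp [sw, h]

lemma sw_empty (a b : Idx r) : sw ∅ a b = a := funext fun l => by simp [sw]

lemma sw_invol (i : Fin n) (a b : Idx r) : sw {i} (sw {i} a b) (sw {i} b a) = a :=
  funext fun l => by
    by_cases hl : l = i
    · subst hl; rw [sw_self, sw_self]
    · rw [sw_other hl, sw_other hl]

lemma isPath_nil {S : Set (Idx r)} {x : Idx r} (hx : x ∈ S) :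
    IsPath S x x 0 fun _ => x :=
  ⟨rfl, rfl, fun _ _ => hx, fun j hj => absurd hj (Nat.not_lt_zero j)⟩

lemma isPath_shift {S : Set (Idx r)} {a b : Idx r} {m : ℕ} {c : ℕ → Idx r}
    (h : IsPath S a b m c) (kk : ℕ) (hk : kk ≤ m) :
    IsPath S (c kk) b (m - kk) fun j => c (j + kk) := by
  obtain ⟨h0, hm, hmem, hstep⟩ := h
  refine ⟨by simp, ?_, fun j hj => hmem _ (by omega), fun j hj => ?_⟩
  · show c (m - kk + kk) = b
    rw [Nat.sub_add_cancel hk]; exact hm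
  · show hdist (c (j + kk)) (c (j + 1 + kk)) = 1
    rw [show j + 1 + kk = j + kk + 1 by omega]
    exact hstep _ (by omega)

lemma isPath_cons {S : Set (Idx r)} {x b : Idx r} {m : ℕ} {c : ℕ → Idx r}
    (h : IsPath S x b m c) {y : Idx r} (hy : y ∈ S) (hd : hdist y x = 1) :
    IsPath S y b (m + 1) fun j => if j = 0 then y else c (j - 1) := by
  obtain ⟨h0, hm, hmem, hstep⟩ := h
  refine ⟨by simp, by simp [hm], fun j hj => ?_, fun j hj => ?_⟩
  · by_cases hj0 : j = 0
    · simp [hj0, hy]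
    · simp only [hj0, if_false]
      exact hmem _ (by omega)
  · by_cases hj0 : j = 0
    · subst hj0
      simpa [h0] using hd
    · simp only [hj0, if_false, show j + 1 ≠ 0 by omega]
      rw [show j + 1 - 1 = j - 1 + 1 by omega]
      exact hstep (j - 1) (by omega)

/-- Key lemma: in a `t`-switchable set, switching the `i`-th coordinates of the two
endpoints of a path yields points of `S` joined by a path at most as long. -/
lemma swap_main {t : ℕ} {S : Set (Idx r)} (hSw : Switchable t S) :
    ∀ m (a b : Idx r) (c : ℕ → Idx r), IsPath S a b m c →
      ∀ i : Fin n, (i : ℕ) < t → a i ≠ b i →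
      ∃ m' ≤ m, ∃ c', IsPath S (sw {i} a b) (sw {i} b a) m' c' := by
  intro m
  induction m using Nat.strong_induction_on with
  | _ m IH =>
    intro a b c hc i hit hne
    obtain ⟨h0, hmb, hmem, hstep⟩ := hc
    rcases Nat.eq_zero_or_pos m with rfl | hmpos
    · exact absurd (by rw [← h0]; exact hmb : a = b) (fun h => hne (congrFun h i))
    have haS : a ∈ S := h0 ▸ hmem 0 (Nat.zero_le _)
    have hbS : b ∈ S := hmb ▸ hmem m le_rfl
    have hstep0 : hdist a (c 1) = 1 := by rw [← h0]; exact hstep 0 hmpos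
    obtain ⟨j0, hj0ne, hj0eq⟩ := exists_of_hdist_one hstep0
    by_cases hA : c 1 i = a i
    · -- first step does not change coordinate i
      have hj0i : j0 ≠ i := by rintro rfl; exact hj0ne hA.symm
      have hc1ne : c 1 i ≠ b i := by rw [hA]; exact hne
      have hsh := isPath_shift ⟨h0, hmb, hmem, hstep⟩ 1 hmpos
      obtain ⟨m'', hm'', p, hp⟩ := IH (m - 1) (by omega) (c 1) b _ hsh i hit hc1ne
      have hrw : sw {i} b (c 1) = sw {i} b a := funext fun l => by
        by_cases hl : l = i
        · subst hl; rw [sw_self, sw_self, hA]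
        · rw [sw_other hl, sw_other hl]
      rw [hrw] at hp
      have hc1'S : sw {i} (c 1) b ∈ S := by
        have := hp.2.2.1 0 (Nat.zero_le _); rwa [hp.1] at this
      have hd2 : hdist a (sw {i} (c 1) b) = 2 := by
        refine hdist_eq_two (show i ≠ j0 from fun h => hj0i h.symm) ?_ ?_ ?_
        · rw [sw_self]; exact hne
        · rw [sw_other hj0i]; exact hj0ne
        · intro l hli hlj0
          rw [sw_other hli]
          exact hj0eq l hlj0
      obtain ⟨ha'S, -⟩ := hSw a haS _ hc1'S hd2 i hit
      have hrw2 : sw {i} a (sw {i} (c 1) b) = sw {i} a b := funext fun l => by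
        by_cases hl : l = i
        · subst hl; rw [sw_self, sw_self, sw_self]
        · rw [sw_other hl, sw_other hl]
      rw [hrw2] at ha'S
      have hd1 : hdist (sw {i} a b) (sw {i} (c 1) b) = 1 := by
        refine hdist_eq_one (j := j0) ?_ ?_
        · rw [sw_other hj0i, sw_other hj0i]; exact hj0ne
        · intro l hl
          by_cases hli : l = i
          · subst hli; rw [sw_self, sw_self]
          · rw [sw_other hli, sw_other hli]; exact hj0eq l hl
      exact ⟨m'' + 1, by omega, _, isPath_cons hp ha'S hd1⟩
    · -- first step changes coordinate i
      have hj0i : j0 = i := by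
        by_contra h
        exact hA (hj0eq i fun h' => h h'.symm).symm
      subst hj0i
      by_cases hm1 : m = 1
      · -- b = c 1, so the switch just reverses the edge
        have hbc : c 1 = b := by rw [← hm1]; exact hmb
        have ha' : sw {j0} a b = b := funext fun l => by
          by_cases hl : l = j0
          · subst hl; rw [sw_self]
          · rw [sw_other hl]
            exact (hj0eq l hl).trans (congrFun hbc l)
        have hb' : sw {j0} b a = a := funext fun l => by
          by_cases hl : l = j0
          · subst hl; rw [sw_self]
          · rw [sw_other hl]
            exact ((hj0eq l hl).trans (congrFun hbc l)).symm
        have hd : hdist (sw {j0} a b) a = 1 := by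
          rw [ha', hdist_comm]
          rw [hbc] at hstep0
          exact hstep0
        have hyS : sw {j0} a b ∈ S := by rw [ha']; exact hbS
        refine ⟨1, by omega, fun j => if j = 0 then sw {j0} a b else a, ?_⟩
        rw [hb']
        exact isPath_cons (isPath_nil haS) hyS hd
      · have hm2 : 2 ≤ m := by omega
        have hstep1 : hdist (c 1) (c 2) = 1 := hstep 1 (by omega)
        obtain ⟨j1, hj1ne, hj1eq⟩ := exists_of_hdist_one hstep1
        by_cases hj1i : j1 = j0
        · subst hj1i
          by_cases hc2 : c 2 j1 = a j1
          · -- the path returns to a after two steps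
            have hc2a : c 2 = a := funext fun l => by
              by_cases hl : l = j1
              · subst hl; exact hc2
              · exact ((hj0eq l hl).trans (hj1eq l hl)).symm
            have hsh := isPath_shift ⟨h0, hmb, hmem, hstep⟩ 2 hm2
            rw [hc2a] at hsh
            obtain ⟨m'', hm'', p, hp⟩ := IH (m - 2) (by omega) a b _ hsh j1 hit hne
            exact ⟨m'', by omega, p, hp⟩
          · -- shortcut: a and c 2 are adjacent
            have hd1 : hdist a (c 2) = 1 := by
              refine hdist_eq_one (j := j1) (fun h => hc2 h.symm) ?_
              intro l hl
              exact (hj0eq l hl).trans (hj1eq l hl)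
            have hsh := isPath_shift ⟨h0, hmb, hmem, hstep⟩ 2 hm2
            have hq := isPath_cons hsh haS hd1
            obtain ⟨m'', hm'', p, hp⟩ := IH (m - 2 + 1) (by omega) a b _ hq j1 hit hne
            exact ⟨m'', by omega, p, hp⟩
        · -- second step changes a different coordinate j1
          have hc2i : c 2 j0 = c 1 j0 := (hj1eq j0 fun h => hj1i h.symm).symm
          have hd2 : hdist a (c 2) = 2 := by
            refine hdist_eq_two (show j0 ≠ j1 from fun h => hj1i h.symm) ?_ ?_ ?_
            · rw [hc2i]; exact hj0ne
            · rw [hj0eq j1 hj1i]; exact hj1ne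
            · intro l hli hlj1
              exact (hj0eq l hli).trans (hj1eq l hlj1)
          have hc2S : c 2 ∈ S := hmem 2 hm2
          obtain ⟨-, heS⟩ := hSw a haS (c 2) hc2S hd2 j0 hit
          have hde : hdist (sw {j0} (c 2) a) (c 2) = 1 := by
            refine hdist_eq_one (j := j0) ?_ (fun l hl => by rw [sw_other hl])
            rw [sw_self, hc2i]
            exact hj0ne
          have hsh := isPath_shift ⟨h0, hmb, hmem, hstep⟩ 2 hm2
          have hq := isPath_cons hsh heS hde
          have henei : sw {j0} (c 2) a j0 ≠ b j0 := by rw [sw_self]; exact hne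
          obtain ⟨m'', hm'', p, hp⟩ := IH (m - 2 + 1) (by omega) _ b _ hq j0 hit henei
          have hrwb : sw {j0} b (sw {j0} (c 2) a) = sw {j0} b a := funext fun l => by
            by_cases hl : l = j0
            · subst hl; rw [sw_self, sw_self, sw_self]
            · rw [sw_other hl, sw_other hl]
          rw [hrwb] at hp
          have he'S : sw {j0} (sw {j0} (c 2) a) b ∈ S := by
            have := hp.2.2.1 0 (Nat.zero_le _); rwa [hp.1] at this
          have hd2' : hdist a (sw {j0} (sw {j0} (c 2) a) b) = 2 := by
            refine hdist_eq_two (show j0 ≠ j1 from fun h => hj1i h.symm) ?_ ?_ ?_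
            · rw [sw_self]; exact hne
            · rw [sw_other hj1i, sw_other hj1i, hj0eq j1 hj1i]
              exact hj1ne
            · intro l hli hlj1
              rw [sw_other hli, sw_other hli]
              exact (hj0eq l hli).trans (hj1eq l hlj1)
          obtain ⟨ha'S, -⟩ := hSw a haS _ he'S hd2' j0 hit
          have hrwa : sw {j0} a (sw {j0} (sw {j0} (c 2) a) b) = sw {j0} a b :=
            funext fun l => by
              by_cases hl : l = j0
              · subst hl; rw [sw_self, sw_self, sw_self]
              · rw [sw_other hl, sw_other hl]
          rw [hrwa] at ha'S
          have hd1' : hdist (sw {j0} a b) (sw {j0} (sw {j0} (c 2) a) b) = 1 := by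
            refine hdist_eq_one (j := j1) ?_ ?_
            · rw [sw_other hj1i, sw_other hj1i, sw_other hj1i, hj0eq j1 hj1i]
              exact hj1ne
            · intro l hl
              by_cases hli : l = j0
              · subst hli; rw [sw_self, sw_self]
              · rw [sw_other hli, sw_other hli, sw_other hli]
                exact (hj0eq l hli).trans (hj1eq l hl)
          exact ⟨m'' + 1, by omega, _, isPath_cons hp ha'S hd1'⟩

lemma swap_conn_pl {t : ℕ} {S : Set (Idx r)} (hSw : Switchable t S) {a b : Idx r}
    (hab : Connected S a b) (i : Fin n) (hit : (i : ℕ) < t) (hne : a i ≠ b i) :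
    Connected S (sw {i} a b) (sw {i} b a) ∧ pl S (sw {i} a b) (sw {i} b a) = pl S a b := by
  obtain ⟨m0, c0, hc0⟩ := hab
  have hne_set : {m | ∃ c, IsPath S a b m c}.Nonempty := ⟨m0, c0, hc0⟩
  obtain ⟨cmin, hcmin⟩ : ∃ c, IsPath S a b (pl S a b) c := Nat.sInf_mem hne_set
  obtain ⟨m', hm', c', hc'⟩ := swap_main hSw _ a b cmin hcmin i hit hne
  have hconn : Connected S (sw {i} a b) (sw {i} b a) := ⟨m', c', hc'⟩
  refine ⟨hconn, le_antisymm (le_trans (Nat.sInf_le ⟨c', hc'⟩) hm') ?_⟩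
  have hne' : sw {i} a b i ≠ sw {i} b a i := by
    rw [sw_self, sw_self]; exact hne.symm
  have hne_set' : {m | ∃ c, IsPath S (sw {i} a b) (sw {i} b a) m c}.Nonempty := ⟨m', c', hc'⟩
  obtain ⟨cm2, hcm2⟩ : ∃ c, IsPath S (sw {i} a b) (sw {i} b a)
      (pl S (sw {i} a b) (sw {i} b a)) c := Nat.sInf_mem hne_set'
  obtain ⟨m2, hm2, c2, hc2⟩ := swap_main hSw _ _ _ cm2 hcm2 i hit hne'
  rw [sw_invol i a b, sw_invol i b a] at hc2
  exact le_trans (Nat.sInf_le ⟨c2, hc2⟩) hm2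

end Aux

/-- every `h_{S,K,a,b}` lies in the ideal `J̃^⟨t⟩_S`. -/
theorem stmt9 (h2 : (2 : k) ≠ 0) (t : ℕ) (S : Set (Idx r)) (hS : Signed t S)
    (a b : Idx r) (hab : Connected S a b) (K : Finset (Fin n))
    (hK : ∀ i ∈ K, (i : ℕ) < t ∧ a i ≠ b i) :
    hbin k S K a b ∈ Jtilde k t S := by
  obtain ⟨hSw, -⟩ := hS
  clear h2
  revert a b hab hK
  induction K using Finset.induction_on with
  | empty =>
    intro a b hab hK
    have h0 : hbin k S ∅ a b = 0 := by
      simp [hbin, sw_empty]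
    rw [h0]
    exact zero_mem _
  | @insert i K' hiK ih =>
    intro a b hab hK
    obtain ⟨hit, hne⟩ := hK i (Finset.mem_insert_self i K')
    obtain ⟨hconn', hpl'⟩ := swap_conn_pl hSw hab i hit hne
    have hswab : sw (insert i K') a b = sw K' (sw {i} a b) (sw {i} b a) := funext fun l => by
      by_cases hl : l ∈ K'
      · have hli : l ≠ i := fun h => hiK (h ▸ hl)
        simp [sw, hl, Finset.mem_insert, hli]
      · by_cases hli : l = i
        · subst hli
          simp [sw, hiK, Finset.mem_insert]
        · simp [sw, hl, hli, Finset.mem_insert]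
    have hswba : sw (insert i K') b a = sw K' (sw {i} b a) (sw {i} a b) := funext fun l => by
      by_cases hl : l ∈ K'
      · have hli : l ≠ i := fun h => hiK (h ▸ hl)
        simp [sw, hl, Finset.mem_insert, hli]
      · by_cases hli : l = i
        · subst hli
          simp [sw, hiK, Finset.mem_insert]
        · simp [sw, hl, hli, Finset.mem_insert]
    have hK' : ∀ j ∈ K', (j : ℕ) < t ∧ sw {i} a b j ≠ sw {i} b a j := by
      intro j hj
      have hji : j ≠ i := fun h => hiK (h ▸ hj)
      obtain ⟨h1, h2'⟩ := hK j (Finset.mem_insert_of_mem hj)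
      exact ⟨h1, by rw [sw_other hji, sw_other hji]; exact h2'⟩
    have hmem' := ih _ _ hconn' hK'
    have hgen : hbin k S {i} a b ∈ Jtilde k t S :=
      Ideal.subset_span ⟨a, b, i, hab, hit, hne, rfl⟩
    have hcard : (insert i K').card = K'.card + 1 := Finset.card_insert_of_notMem hiK
    have key : hbin k S (insert i K') a b
        = hbin k S {i} a b
          + (-1 : MvPolynomial (Idx r) k) ^ (pl S a b - 1)
            * hbin k S K' (sw {i} a b) (sw {i} b a) := by
      simp only [hbin, hswab, hswba, hpl', hcard, Finset.card_singleton, one_mul]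
      rw [show (K'.card + 1) * (pl S a b - 1) = K'.card * (pl S a b - 1) + (pl S a b - 1)
        by ring, pow_add]
      ring
    rw [key]
    exact add_mem hgen (Ideal.mul_mem_left _ _ hmem')
end

section
/- Let U ⊆ N be contained in a 2 × 3 submatrix of N whose entries vary only in components i and j, where at least one of i, j lies in [t]. Suppose U is not contained in any 2 × 2 submatrix nor in any 1 × 3 submatrix. Then U is not a subset of any t-signed set. -/
open MvPolynomial Finset

variable {n : ℕ} {r : Fin n → ℕ}

variable (k : Type*) [Field k]

section Aux13

variable {n : ℕ} {r : Fin n → ℕ}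

/-- A grid point: `p` at `i`, `q` at `j`, `v` elsewhere. -/
def gp13 (i j : Fin n) (v : Idx r) (p : Fin (r i)) (q : Fin (r j)) : Idx r :=
  Function.update (Function.update v i p) j q

variable {i j : Fin n} {v : Idx r}

lemma gp13_i (hij : i ≠ j) (p : Fin (r i)) (q : Fin (r j)) : gp13 i j v p q i = p := by
  simp [gp13, Function.update_of_ne hij]

lemma gp13_j (p : Fin (r i)) (q : Fin (r j)) : gp13 i j v p q j = q := by
  simp [gp13]

lemma gp13_other {m : Fin n} (hmi : m ≠ i) (hmj : m ≠ j) (p : Fin (r i)) (q : Fin (r j)) :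
    gp13 i j v p q m = v m := by
  simp [gp13, Function.update_of_ne hmj, Function.update_of_ne hmi]

lemma hdist_gp13_i (hij : i ≠ j) {p p' : Fin (r i)} (hp : p ≠ p') (q : Fin (r j)) :
    hdist (gp13 i j v p q) (gp13 i j v p' q) = 1 := by
  unfold hdist
  have h : (univ.filter fun m => gp13 i j v p q m ≠ gp13 i j v p' q m) = {i} := by
    ext m
    simp only [mem_filter, mem_univ, true_and, mem_singleton]
    constructor
    · intro h
      by_contra hmi
      rcases eq_or_ne m j with rfl | hmj
      · exact h (by rw [gp13_j, gp13_j])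
      · exact h (by rw [gp13_other hmi hmj, gp13_other hmi hmj])
    · rintro rfl
      rw [gp13_i hij, gp13_i hij]
      exact hp
  rw [h, card_singleton]

lemma hdist_gp13_j (hij : i ≠ j) (p : Fin (r i)) {q q' : Fin (r j)} (hq : q ≠ q') :
    hdist (gp13 i j v p q) (gp13 i j v p q') = 1 := by
  unfold hdist
  have h : (univ.filter fun m => gp13 i j v p q m ≠ gp13 i j v p q' m) = {j} := by
    ext m
    simp only [mem_filter, mem_univ, true_and, mem_singleton]
    constructor
    · intro h
      by_contra hmj
      rcases eq_or_ne m i with rfl | hmi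
      · exact h (by rw [gp13_i hij, gp13_i hij])
      · exact h (by rw [gp13_other hmi hmj, gp13_other hmi hmj])
    · rintro rfl
      rw [gp13_j, gp13_j]
      exact hq
  rw [h, card_singleton]

lemma hdist_gp13_two (hij : i ≠ j) {p p' : Fin (r i)} {q q' : Fin (r j)}
    (hp : p ≠ p') (hq : q ≠ q') :
    hdist (gp13 i j v p q) (gp13 i j v p' q') = 2 := by
  unfold hdist
  have h : (univ.filter fun m => gp13 i j v p q m ≠ gp13 i j v p' q' m) = {i, j} := by
    ext m
    simp only [mem_filter, mem_univ, true_and, mem_insert, mem_singleton]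
    constructor
    · intro h
      by_contra hm
      push_neg at hm
      exact h (by rw [gp13_other hm.1 hm.2, gp13_other hm.1 hm.2])
    · rintro (rfl | rfl)
      · rw [gp13_i hij, gp13_i hij]; exact hp
      · rw [gp13_j, gp13_j]; exact hq
  rw [h, card_insert_of_notMem (by simpa using hij), card_singleton]

lemma sw13_i (hij : i ≠ j) (p p' : Fin (r i)) (q q' : Fin (r j)) :
    sw {i} (gp13 i j v p q) (gp13 i j v p' q') = gp13 i j v p' q := by
  funext m
  simp only [sw, Finset.mem_singleton]
  split_ifs with h
  · subst h; rw [gp13_i hij, gp13_i hij]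
  · rcases eq_or_ne m j with rfl | hmj
    · rw [gp13_j, gp13_j]
    · rw [gp13_other h hmj, gp13_other h hmj]

lemma sw13_j (hij : i ≠ j) (p p' : Fin (r i)) (q q' : Fin (r j)) :
    sw {j} (gp13 i j v p q) (gp13 i j v p' q') = gp13 i j v p q' := by
  funext m
  simp only [sw, Finset.mem_singleton]
  split_ifs with h
  · subst h; rw [gp13_j, gp13_j]
  · rcases eq_or_ne m i with rfl | hmi
    · rw [gp13_i hij, gp13_i hij]
    · rw [gp13_other hmi h, gp13_other hmi h]

lemma rect13 {t : ℕ} {S : Set (Idx r)} (hSw : Switchable t S) (hij : i ≠ j)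
    (hit : (i : ℕ) < t ∨ (j : ℕ) < t) {p p' : Fin (r i)} {q q' : Fin (r j)}
    (hp : p ≠ p') (hq : q ≠ q')
    (ha : gp13 i j v p q ∈ S) (hb : gp13 i j v p' q' ∈ S) :
    gp13 i j v p' q ∈ S ∧ gp13 i j v p q' ∈ S := by
  have hd := hdist_gp13_two (v := v) hij hp hq
  rcases hit with h | h
  · have H := hSw _ ha _ hb hd i h
    rw [sw13_i hij, sw13_i hij] at H
    exact H
  · have H := hSw _ ha _ hb hd j h
    rw [sw13_j hij, sw13_j hij] at H
    exact ⟨H.2, H.1⟩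

lemma connected_self13 {S : Set (Idx r)} {a : Idx r} (ha : a ∈ S) : Connected S a a :=
  ⟨0, fun _ => a, rfl, rfl, fun _ _ => ha, fun m h => absurd h (Nat.not_lt_zero m)⟩

lemma isPath_one13 {S : Set (Idx r)} {a b : Idx r} (ha : a ∈ S) (hb : b ∈ S)
    (h : hdist a b = 1) :
    IsPath S a b 1 (fun m => if m = 0 then a else b) := by
  refine ⟨rfl, by norm_num, fun m hm => ?_, fun m hm => ?_⟩
  · dsimp only; split_ifs <;> [exact ha; exact hb]
  · interval_cases m
    simpa using h

lemma isPath_two13 {S : Set (Idx r)} {a b c : Idx r} (ha : a ∈ S) (hb : b ∈ S) (hc : c ∈ S)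
    (h1 : hdist a b = 1) (h2 : hdist b c = 1) :
    IsPath S a c 2 (fun m => if m = 0 then a else if m = 1 then b else c) := by
  refine ⟨rfl, by norm_num, fun m hm => ?_, fun m hm => ?_⟩
  · dsimp only; split_ifs <;> first | exact ha | exact hb | exact hc
  · interval_cases m
    · simpa using h1
    · simpa using h2

end Aux13

/-- a subset of a `2 × 3` submatrix (varying in components `i`, `j` with
`i ∈ [t]` or `j ∈ [t]`) that fits in no `2 × 2` nor `1 × 3` submatrix is contained in
no `t`-signed set. -/
theorem stmt13 (t : ℕ) (U : Set (Idx r)) (i j : Fin n) (hij : i ≠ j)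
    (hit : (i : ℕ) < t ∨ (j : ℕ) < t)
    (P : Set (Fin (r i))) (Q : Set (Fin (r j))) (hP : P.ncard = 2) (hQ : Q.ncard = 3)
    (v : Idx r)
    (hU : ∀ a ∈ U, a i ∈ P ∧ a j ∈ Q ∧ ∀ m, m ≠ i → m ≠ j → a m = v m)
    (hnot22 : ¬ ∃ B : Set (Fin (r j)), B.ncard ≤ 2 ∧ ∀ a ∈ U, a j ∈ B)
    (hnot13 : ¬ ∃ c : Fin (r i), ∀ a ∈ U, a i = c) :
    ∀ S : Set (Idx r), Signed t S → ¬ U ⊆ S := by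
  intro S hS hUS
  obtain ⟨hSw, hclass⟩ := hS
  -- every element of U is a grid point
  have hgrid : ∀ a ∈ U, a = gp13 i j v (a i) (a j) := by
    intro a ha
    funext m
    rcases eq_or_ne m i with rfl | hmi
    · rw [gp13_i hij]
    · rcases eq_or_ne m j with rfl | hmj
      · rw [gp13_j]
      · rw [gp13_other hmi hmj]; exact (hU a ha).2.2 m hmi hmj
  -- two distinct rows hit by U
  push_neg at hnot13
  obtain ⟨x, hxU, -⟩ := hnot13 (v i)
  obtain ⟨y, hyU, hxy⟩ := hnot13 (x i)
  have hp01 : x i ≠ y i := fun h => hxy h.symm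
  -- P is exactly the two rows
  have hPeq : P = {x i, y i} := by
    refine (Set.eq_of_subset_of_ncard_le ?_ ?_ (Set.toFinite P)).symm
    · rw [Set.insert_subset_iff, Set.singleton_subset_iff]
      exact ⟨(hU x hxU).1, (hU y hyU).1⟩
    · rw [hP, Set.ncard_pair hp01]
  have hrow : ∀ a ∈ U, a i = x i ∨ a i = y i := by
    intro a ha
    have h := (hU a ha).1
    rw [hPeq] at h
    simpa using h
  -- every column of Q is hit by U
  have hcol : ∀ q ∈ Q, ∃ a ∈ U, a j = q := by
    intro q hq
    by_contra hcon
    push_neg at hcon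
    apply hnot22
    refine ⟨Q \ {q}, ?_, ?_⟩
    · have h := Set.ncard_diff_singleton_lt_of_mem hq (Set.toFinite Q)
      omega
    · intro a ha
      exact ⟨(hU a ha).2.1, by simpa using hcon a ha⟩
  -- names for the three columns
  obtain ⟨c1, c2, c3, h12, h13, h23, hQ3⟩ := Set.ncard_eq_three.mp hQ
  have hc1 : c1 ∈ Q := by rw [hQ3]; simp
  have hc2 : c2 ∈ Q := by rw [hQ3]; simp
  have hc3 : c3 ∈ Q := by rw [hQ3]; simp
  -- grid memberships of x and y
  have hx' : gp13 i j v (x i) (x j) ∈ S := by rw [← hgrid x hxU]; exact hUS hxU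
  have hy' : gp13 i j v (y i) (y j) ∈ S := by rw [← hgrid y hyU]; exact hUS hyU
  -- a column q is "full" if both grid points of column q lie in S
  -- first: two distinct full columns
  obtain ⟨qa, qb, hqaQ, hqbQ, hqab, hFa, hFb⟩ :
      ∃ qa qb, qa ∈ Q ∧ qb ∈ Q ∧ qa ≠ qb ∧
        (gp13 i j v (x i) qa ∈ S ∧ gp13 i j v (y i) qa ∈ S) ∧
        (gp13 i j v (x i) qb ∈ S ∧ gp13 i j v (y i) qb ∈ S) := by
    rcases eq_or_ne (x j) (y j) with hq | hq
    · -- x,y in the same column; find another column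
      obtain ⟨q2, hq2Q, hq2⟩ : ∃ q2 ∈ Q, q2 ≠ x j := by
        rcases eq_or_ne c1 (x j) with rfl | h
        · exact ⟨c2, hc2, fun hh => h12 hh.symm⟩
        · exact ⟨c1, hc1, h⟩
      obtain ⟨z, hzU, hzj⟩ := hcol q2 hq2Q
      have hz' : gp13 i j v (z i) q2 ∈ S := by
        rw [← hzj, ← hgrid z hzU]; exact hUS hzU
      have hy'' : gp13 i j v (y i) (x j) ∈ S := by rw [hq]; exact hy'
      rcases hrow z hzU with hz0 | hz1
      · rw [hz0] at hz'
        have H := rect13 hSw hij hit hp01 hq2 hz' hy''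
        exact ⟨q2, x j, hq2Q, (hU x hxU).2.1, hq2, ⟨hz', H.1⟩, ⟨hx', hy''⟩⟩
      · rw [hz1] at hz'
        have H := rect13 hSw hij hit hxy hq2 hz' hx'
        exact ⟨q2, x j, hq2Q, (hU x hxU).2.1, hq2, ⟨H.1, hz'⟩, ⟨hx', hy''⟩⟩
    · have H := rect13 hSw hij hit hp01 hq hx' hy'
      exact ⟨x j, y j, (hU x hxU).2.1, (hU y hyU).2.1, hq, ⟨hx', H.1⟩, ⟨H.2, hy'⟩⟩
  -- then: every column of Q is full
  have hFull : ∀ q ∈ Q, gp13 i j v (x i) q ∈ S ∧ gp13 i j v (y i) q ∈ S := by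
    intro q hqQ
    rcases eq_or_ne q qa with rfl | hqa'
    · exact hFa
    rcases eq_or_ne q qb with rfl | hqb'
    · exact hFb
    obtain ⟨w, hwU, hwj⟩ := hcol q hqQ
    have hw' : gp13 i j v (w i) q ∈ S := by
      rw [← hwj, ← hgrid w hwU]; exact hUS hwU
    rcases hrow w hwU with h0 | h1
    · rw [h0] at hw'
      have H := rect13 hSw hij hit hp01 hqa' hw' hFa.2
      exact ⟨hw', H.1⟩
    · rw [h1] at hw'
      have H := rect13 hSw hij hit hxy hqa' hw' hFa.1
      exact ⟨H.1, hw'⟩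
  have F1 := hFull c1 hc1
  have F2 := hFull c2 hc2
  have F3 := hFull c3 hc3
  -- the base point
  have ha0 : gp13 i j v (x i) c1 ∈ S := F1.1
  have conn0 : Connected S (gp13 i j v (x i) c1) (gp13 i j v (x i) c1) :=
    connected_self13 ha0
  rcases hclass _ ha0 with h1 | h2 | h3
  · rcases hit with hi' | hj'
    · have hc : Connected S (gp13 i j v (x i) c1) (gp13 i j v (y i) c1) :=
        ⟨1, _, isPath_one13 ha0 F1.2 (hdist_gp13_i hij hp01 c1)⟩
      have h := h1 _ _ conn0 hc i hi'
      rw [gp13_i hij, gp13_i hij] at h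
      exact hp01 h
    · have hc : Connected S (gp13 i j v (x i) c1) (gp13 i j v (x i) c2) :=
        ⟨1, _, isPath_one13 ha0 F2.1 (hdist_gp13_j hij (x i) h12)⟩
      have h := h1 _ _ conn0 hc j hj'
      rw [gp13_j, gp13_j] at h
      exact h12 h
  · have hc : Connected S (gp13 i j v (x i) c1) (gp13 i j v (y i) c2) :=
      ⟨2, _, isPath_two13 ha0 F1.2 F2.2 (hdist_gp13_i hij hp01 c1)
        (hdist_gp13_j hij (y i) h12)⟩
    have h := h2 _ _ conn0 hc
    rw [hdist_gp13_two hij hp01 h12] at h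
    omega
  · have hc : Connected S (gp13 i j v (x i) c1) (gp13 i j v (x i) c2) :=
      ⟨1, _, isPath_one13 ha0 F2.1 (hdist_gp13_j hij (x i) h12)⟩
    have hP1 := isPath_one13 ha0 F2.1 (hdist_gp13_j hij (x i) h12)
    have hP2 := isPath_two13 ha0 F3.1 F2.1 (hdist_gp13_j hij (x i) h13)
      (hdist_gp13_j hij (x i) (Ne.symm h23))
    have h := h3 _ _ conn0 hc 1 2 _ _ hP1 hP2
    norm_num at h
end
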